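/- In the alternating group A₅, the product of any three non-trivial conjugacy classes covers A₅ ∖ {1}: for all non-trivial u₁, u₂, u₃ and any non-trivial u₄, there exist x, y, z with u₄ = x⁻¹u₁x · y⁻¹u₂y · z⁻¹u₃z. -/
import Mathlib

open Equiv

private def repP : Fin 4 → Perm (Fin 5)
  | 0 => c[(0:Fin 5),1] * c[(2:Fin 5),3]
  | 1 => c[(0:Fin 5),1,2]
  | 2 => c[(0:Fin 5),1,2,3,4]
  | 3 => c[(0:Fin 5),2,4,1,3]

private def witP : Fin 4 → Fin 4 → Fin 4 → Fin 4 → Perm (Fin 5) × Perm (Fin 5) × Perm (Fin 5)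
  | 0, 0, 0, 0 => (1, 1, 1)
  | 0, 0, 0, 1 => (1, c[(1:Fin 5),2,4], c[(1:Fin 5),4] * c[(2:Fin 5),3])
  | 0, 0, 0, 2 => (1, c[(1:Fin 5),2] * c[(3:Fin 5),4], c[(1:Fin 5),3,2])
  | 0, 0, 0, 3 => (1, c[(2:Fin 5),3,4], c[(1:Fin 5),3] * c[(2:Fin 5),4])
  | 0, 0, 1, 0 => (c[(2:Fin 5),3,4], c[(1:Fin 5),4,2], c[(1:Fin 5),4,2])
  | 0, 0, 1, 1 => (1, 1, 1)
  | 0, 0, 1, 2 => (1, c[(2:Fin 5),4,3], c[(2:Fin 5),3,4])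
  | 0, 0, 1, 3 => (1, c[(1:Fin 5),2,3], c[(0:Fin 5),4,1,3,2])
  | 0, 0, 2, 0 => (c[(2:Fin 5),3,4], c[(1:Fin 5),2] * c[(3:Fin 5),4], c[(1:Fin 5),3,2])
  | 0, 0, 2, 1 => (1, c[(2:Fin 5),3,4], c[(2:Fin 5),4,3])
  | 0, 0, 2, 2 => (1, 1, 1)
  | 0, 0, 2, 3 => (c[(2:Fin 5),3,4], c[(1:Fin 5),2] * c[(3:Fin 5),4], c[(2:Fin 5),4,3])
  | 0, 0, 3, 0 => (c[(2:Fin 5),3,4], c[(1:Fin 5),3,2], c[(1:Fin 5),4,3])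
  | 0, 0, 3, 1 => (1, c[(2:Fin 5),4,3], c[(1:Fin 5),2,3])
  | 0, 0, 3, 2 => (1, c[(2:Fin 5),3,4], c[(1:Fin 5),2] * c[(3:Fin 5),4])
  | 0, 0, 3, 3 => (1, 1, 1)
  | 0, 1, 0, 0 => (c[(2:Fin 5),3,4], c[(1:Fin 5),4,2], c[(1:Fin 5),4] * c[(2:Fin 5),3])
  | 0, 1, 0, 1 => (1, 1, c[(1:Fin 5),3,2])
  | 0, 1, 0, 2 => (1, c[(2:Fin 5),3,4], c[(1:Fin 5),2,4])
  | 0, 1, 0, 3 => (1, 1, c[(1:Fin 5),4,3])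
  | 0, 1, 1, 0 => (1, 1, c[(1:Fin 5),2] * c[(3:Fin 5),4])
  | 0, 1, 1, 1 => (1, c[(2:Fin 5),4,3], c[(1:Fin 5),4,3])
  | 0, 1, 1, 2 => (1, c[(2:Fin 5),4,3], c[(1:Fin 5),3] * c[(2:Fin 5),4])
  | 0, 1, 1, 3 => (1, c[(1:Fin 5),2,3], c[(0:Fin 5),3,4,2,1])
  | 0, 1, 2, 0 => (c[(2:Fin 5),3,4], c[(1:Fin 5),2] * c[(3:Fin 5),4], 1)
  | 0, 1, 2, 1 => (1, c[(2:Fin 5),3,4], c[(1:Fin 5),2,4])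
  | 0, 1, 2, 2 => (1, c[(1:Fin 5),2] * c[(3:Fin 5),4], c[(2:Fin 5),4,3])
  | 0, 1, 2, 3 => (1, c[(1:Fin 5),2] * c[(3:Fin 5),4], c[(1:Fin 5),4,3])
  | 0, 1, 3, 0 => (c[(2:Fin 5),3,4], 1, c[(1:Fin 5),3,4])
  | 0, 1, 3, 1 => (1, c[(1:Fin 5),2,4], c[(1:Fin 5),2] * c[(3:Fin 5),4])
  | 0, 1, 3, 2 => (1, 1, c[(1:Fin 5),4,3])
  | 0, 1, 3, 3 => (1, c[(2:Fin 5),4,3], c[(1:Fin 5),2,4])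
  | 0, 2, 0, 0 => (c[(2:Fin 5),3,4], c[(1:Fin 5),3,2], c[(1:Fin 5),2,4])
  | 0, 2, 0, 1 => (1, c[(2:Fin 5),4,3], c[(1:Fin 5),4,2])
  | 0, 2, 0, 2 => (1, 1, c[(1:Fin 5),3,4])
  | 0, 2, 0, 3 => (c[(2:Fin 5),3,4], 1, c[(1:Fin 5),2,3])
  | 0, 2, 1, 0 => (c[(2:Fin 5),3,4], 1, c[(1:Fin 5),2,4])
  | 0, 2, 1, 1 => (1, c[(1:Fin 5),2,4], c[(1:Fin 5),4,2])
  | 0, 2, 1, 2 => (1, c[(2:Fin 5),4,3], c[(1:Fin 5),4,2])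
  | 0, 2, 1, 3 => (1, 1, c[(1:Fin 5),3,2])
  | 0, 2, 2, 0 => (1, 1, c[(1:Fin 5),4] * c[(2:Fin 5),3])
  | 0, 2, 2, 1 => (1, c[(2:Fin 5),3,4], c[(1:Fin 5),3] * c[(2:Fin 5),4])
  | 0, 2, 2, 2 => (1, c[(2:Fin 5),3,4], c[(1:Fin 5),2,3])
  | 0, 2, 2, 3 => (1, c[(2:Fin 5),3,4], c[(1:Fin 5),2] * c[(3:Fin 5),4])
  | 0, 2, 3, 0 => (c[(2:Fin 5),3,4], c[(1:Fin 5),4,2], c[(1:Fin 5),2] * c[(3:Fin 5),4])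
  | 0, 2, 3, 1 => (1, 1, c[(2:Fin 5),3,4])
  | 0, 2, 3, 2 => (1, c[(1:Fin 5),2] * c[(3:Fin 5),4], c[(1:Fin 5),4] * c[(2:Fin 5),3])
  | 0, 2, 3, 3 => (1, c[(1:Fin 5),3,4], c[(1:Fin 5),2,3])
  | 0, 3, 0, 0 => (c[(2:Fin 5),3,4], c[(1:Fin 5),4,2], c[(1:Fin 5),3] * c[(2:Fin 5),4])
  | 0, 3, 0, 1 => (1, 1, c[(1:Fin 5),4,3])
  | 0, 3, 0, 2 => (1, c[(1:Fin 5),2] * c[(3:Fin 5),4], c[(1:Fin 5),4] * c[(2:Fin 5),3])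
  | 0, 3, 0, 3 => (1, 1, c[(2:Fin 5),4,3])
  | 0, 3, 1, 0 => (c[(2:Fin 5),3,4], c[(1:Fin 5),3,2], 1)
  | 0, 3, 1, 1 => (1, c[(2:Fin 5),4,3], c[(1:Fin 5),2,4])
  | 0, 3, 1, 2 => (1, 1, c[(1:Fin 5),4,3])
  | 0, 3, 1, 3 => (1, c[(2:Fin 5),3,4], c[(1:Fin 5),3,4])
  | 0, 3, 2, 0 => (c[(2:Fin 5),3,4], c[(1:Fin 5),2] * c[(3:Fin 5),4], c[(1:Fin 5),4] * c[(2:Fin 5),3])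
  | 0, 3, 2, 1 => (1, c[(2:Fin 5),3,4], c[(1:Fin 5),3,2])
  | 0, 3, 2, 2 => (1, c[(2:Fin 5),3,4], c[(1:Fin 5),2] * c[(3:Fin 5),4])
  | 0, 3, 2, 3 => (1, c[(1:Fin 5),2,3], c[(1:Fin 5),3,4])
  | 0, 3, 3, 0 => (1, 1, c[(1:Fin 5),4] * c[(2:Fin 5),3])
  | 0, 3, 3, 1 => (1, c[(1:Fin 5),2,4], c[(1:Fin 5),4] * c[(2:Fin 5),3])
  | 0, 3, 3, 2 => (1, c[(2:Fin 5),4,3], c[(1:Fin 5),3] * c[(2:Fin 5),4])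
  | 0, 3, 3, 3 => (1, c[(1:Fin 5),3,4], c[(1:Fin 5),3,4])
  | 1, 0, 0, 0 => (1, c[(1:Fin 5),2,4], c[(1:Fin 5),3,4])
  | 1, 0, 0, 1 => (1, 1, 1)
  | 1, 0, 0, 2 => (1, 1, c[(2:Fin 5),4,3])
  | 1, 0, 0, 3 => (1, c[(2:Fin 5),4,3], c[(0:Fin 5),4,1])
  | 1, 0, 1, 0 => (1, 1, c[(2:Fin 5),4,3])
  | 1, 0, 1, 1 => (c[(2:Fin 5),3,4], c[(2:Fin 5),3,4], c[(2:Fin 5),3,4])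
  | 1, 0, 1, 2 => (1, c[(1:Fin 5),4,2], c[(1:Fin 5),4,2])
  | 1, 0, 1, 3 => (1, 1, c[(0:Fin 5),3,4,2,1])
  | 1, 0, 2, 0 => (1, c[(2:Fin 5),3,4], c[(2:Fin 5),3,4])
  | 1, 0, 2, 1 => (c[(2:Fin 5),3,4], c[(2:Fin 5),4,3], 1)
  | 1, 0, 2, 2 => (1, c[(1:Fin 5),2] * c[(3:Fin 5),4], c[(1:Fin 5),3,2])
  | 1, 0, 2, 3 => (1, c[(1:Fin 5),2] * c[(3:Fin 5),4], c[(1:Fin 5),3,4])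
  | 1, 0, 3, 0 => (1, c[(2:Fin 5),4,3], c[(1:Fin 5),2,4])
  | 1, 0, 3, 1 => (c[(2:Fin 5),3,4], 1, c[(1:Fin 5),2] * c[(3:Fin 5),4])
  | 1, 0, 3, 2 => (1, c[(1:Fin 5),3,2], c[(1:Fin 5),4,3])
  | 1, 0, 3, 3 => (c[(2:Fin 5),4,3], c[(2:Fin 5),4,3], c[(1:Fin 5),3,4])
  | 1, 1, 0, 0 => (1, c[(2:Fin 5),4,3], c[(1:Fin 5),2,3])
  | 1, 1, 0, 1 => (c[(2:Fin 5),3,4], c[(2:Fin 5),3,4], c[(1:Fin 5),3,4])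
  | 1, 1, 0, 2 => (1, c[(1:Fin 5),4,2], c[(1:Fin 5),4] * c[(2:Fin 5),3])
  | 1, 1, 0, 3 => (1, 1, c[(0:Fin 5),4,2,3,1])
  | 1, 1, 1, 0 => (1, 1, c[(1:Fin 5),3,2])
  | 1, 1, 1, 1 => (1, 1, c[(1:Fin 5),2] * c[(3:Fin 5),4])
  | 1, 1, 1, 2 => (1, c[(1:Fin 5),3,2], c[(1:Fin 5),3] * c[(2:Fin 5),4])
  | 1, 1, 1, 3 => (1, c[(2:Fin 5),3,4], c[(0:Fin 5),3,1])
  | 1, 1, 2, 0 => (1, c[(1:Fin 5),2,4], 1)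
  | 1, 1, 2, 1 => (c[(2:Fin 5),3,4], c[(2:Fin 5),4,3], c[(1:Fin 5),2,3])
  | 1, 1, 2, 2 => (1, c[(1:Fin 5),2] * c[(3:Fin 5),4], 1)
  | 1, 1, 2, 3 => (1, c[(1:Fin 5),2,3], c[(1:Fin 5),4,3])
  | 1, 1, 3, 0 => (1, c[(2:Fin 5),3,4], c[(1:Fin 5),4,2])
  | 1, 1, 3, 1 => (c[(2:Fin 5),3,4], c[(1:Fin 5),2,3], c[(1:Fin 5),2,4])
  | 1, 1, 3, 2 => (1, 1, c[(1:Fin 5),3,4])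
  | 1, 1, 3, 3 => (1, c[(1:Fin 5),2] * c[(3:Fin 5),4], 1)
  | 1, 2, 0, 0 => (1, c[(2:Fin 5),3,4], c[(1:Fin 5),3] * c[(2:Fin 5),4])
  | 1, 2, 0, 1 => (c[(2:Fin 5),3,4], 1, c[(1:Fin 5),4] * c[(2:Fin 5),3])
  | 1, 2, 0, 2 => (1, c[(1:Fin 5),3,2], c[(1:Fin 5),2,4])
  | 1, 2, 0, 3 => (1, c[(2:Fin 5),3,4], c[(0:Fin 5),4,3,2,1])
  | 1, 2, 1, 0 => (1, 1, c[(1:Fin 5),4] * c[(2:Fin 5),3])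
  | 1, 2, 1, 1 => (c[(2:Fin 5),3,4], c[(1:Fin 5),2,3], c[(1:Fin 5),4] * c[(2:Fin 5),3])
  | 1, 2, 1, 2 => (1, 1, c[(1:Fin 5),2,4])
  | 1, 2, 1, 3 => (1, 1, c[(0:Fin 5),4,3,2,1])
  | 1, 2, 2, 0 => (1, c[(2:Fin 5),4,3], c[(1:Fin 5),2] * c[(3:Fin 5),4])
  | 1, 2, 2, 1 => (1, 1, c[(1:Fin 5),4] * c[(2:Fin 5),3])
  | 1, 2, 2, 2 => (1, c[(1:Fin 5),2] * c[(3:Fin 5),4], c[(1:Fin 5),2,3])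
  | 1, 2, 2, 3 => (1, c[(1:Fin 5),2] * c[(3:Fin 5),4], c[(1:Fin 5),2] * c[(3:Fin 5),4])
  | 1, 2, 3, 0 => (1, c[(1:Fin 5),2,4], c[(1:Fin 5),4,3])
  | 1, 2, 3, 1 => (c[(2:Fin 5),3,4], c[(2:Fin 5),3,4], c[(2:Fin 5),4,3])
  | 1, 2, 3, 2 => (1, c[(1:Fin 5),4,2], c[(1:Fin 5),2] * c[(3:Fin 5),4])
  | 1, 2, 3, 3 => (1, c[(1:Fin 5),3] * c[(2:Fin 5),4], c[(1:Fin 5),3] * c[(2:Fin 5),4])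
  | 1, 3, 0, 0 => (1, c[(1:Fin 5),2,4], c[(1:Fin 5),4,3])
  | 1, 3, 0, 1 => (c[(2:Fin 5),3,4], c[(2:Fin 5),3,4], c[(1:Fin 5),4,2])
  | 1, 3, 0, 2 => (1, c[(1:Fin 5),4,2], c[(1:Fin 5),3] * c[(2:Fin 5),4])
  | 1, 3, 0, 3 => (c[(2:Fin 5),4,3], c[(2:Fin 5),4,3], c[(1:Fin 5),2,3])
  | 1, 3, 1, 0 => (1, c[(2:Fin 5),3,4], c[(1:Fin 5),4,2])
  | 1, 3, 1, 1 => (c[(2:Fin 5),3,4], 1, c[(1:Fin 5),2,3])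
  | 1, 3, 1, 2 => (1, c[(1:Fin 5),3,2], 1)
  | 1, 3, 1, 3 => (1, 1, c[(1:Fin 5),4] * c[(2:Fin 5),3])
  | 1, 3, 2, 0 => (1, c[(2:Fin 5),4,3], c[(1:Fin 5),2,4])
  | 1, 3, 2, 1 => (c[(2:Fin 5),3,4], c[(2:Fin 5),4,3], c[(1:Fin 5),3,4])
  | 1, 3, 2, 2 => (1, c[(1:Fin 5),2] * c[(3:Fin 5),4], c[(1:Fin 5),4] * c[(2:Fin 5),3])
  | 1, 3, 2, 3 => (1, c[(1:Fin 5),3] * c[(2:Fin 5),4], c[(1:Fin 5),3] * c[(2:Fin 5),4])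
  | 1, 3, 3, 0 => (1, 1, c[(1:Fin 5),3,2])
  | 1, 3, 3, 1 => (1, 1, c[(1:Fin 5),4] * c[(2:Fin 5),3])
  | 1, 3, 3, 2 => (1, 1, c[(2:Fin 5),4,3])
  | 1, 3, 3, 3 => (1, c[(2:Fin 5),3,4], c[(1:Fin 5),4] * c[(2:Fin 5),3])
  | 2, 0, 0, 0 => (1, c[(1:Fin 5),2] * c[(3:Fin 5),4], c[(1:Fin 5),4,2])
  | 2, 0, 0, 1 => (1, 1, c[(2:Fin 5),3,4])
  | 2, 0, 0, 2 => (1, 1, 1)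
  | 2, 0, 0, 3 => (1, c[(2:Fin 5),3,4], c[(0:Fin 5),4,1])
  | 2, 0, 1, 0 => (1, c[(2:Fin 5),4,3], c[(2:Fin 5),4,3])
  | 2, 0, 1, 1 => (1, c[(1:Fin 5),4,2], c[(1:Fin 5),3,2])
  | 2, 0, 1, 2 => (c[(2:Fin 5),3,4], c[(2:Fin 5),4,3], c[(2:Fin 5),4,3])
  | 2, 0, 1, 3 => (1, 1, c[(0:Fin 5),4,2,3,1])
  | 2, 0, 2, 0 => (1, 1, c[(2:Fin 5),3,4])
  | 2, 0, 2, 1 => (1, c[(1:Fin 5),2] * c[(3:Fin 5),4], c[(1:Fin 5),2] * c[(3:Fin 5),4])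
  | 2, 0, 2, 2 => (c[(2:Fin 5),3,4], 1, c[(2:Fin 5),3,4])
  | 2, 0, 2, 3 => (c[(2:Fin 5),3,4], 1, c[(1:Fin 5),2,4])
  | 2, 0, 3, 0 => (1, c[(2:Fin 5),3,4], c[(1:Fin 5),2,4])
  | 2, 0, 3, 1 => (1, c[(1:Fin 5),3,2], 1)
  | 2, 0, 3, 2 => (c[(2:Fin 5),3,4], c[(2:Fin 5),3,4], c[(1:Fin 5),2,4])
  | 2, 0, 3, 3 => (1, c[(1:Fin 5),2] * c[(3:Fin 5),4], c[(1:Fin 5),3] * c[(2:Fin 5),4])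
  | 2, 1, 0, 0 => (1, c[(2:Fin 5),4,3], c[(1:Fin 5),3] * c[(2:Fin 5),4])
  | 2, 1, 0, 1 => (1, c[(1:Fin 5),3,2], c[(1:Fin 5),4,3])
  | 2, 1, 0, 2 => (c[(2:Fin 5),3,4], c[(2:Fin 5),4,3], c[(1:Fin 5),3] * c[(2:Fin 5),4])
  | 2, 1, 0, 3 => (1, c[(2:Fin 5),4,3], c[(0:Fin 5),4,3,2,1])
  | 2, 1, 1, 0 => (1, c[(2:Fin 5),3,4], c[(1:Fin 5),4] * c[(2:Fin 5),3])
  | 2, 1, 1, 1 => (1, c[(1:Fin 5),4,2], c[(1:Fin 5),4] * c[(2:Fin 5),3])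
  | 2, 1, 1, 2 => (1, 1, c[(1:Fin 5),2] * c[(3:Fin 5),4])
  | 2, 1, 1, 3 => (1, 1, c[(0:Fin 5),3,1,4,2])
  | 2, 1, 2, 0 => (1, 1, c[(1:Fin 5),2] * c[(3:Fin 5),4])
  | 2, 1, 2, 1 => (1, 1, c[(1:Fin 5),4,2])
  | 2, 1, 2, 2 => (c[(2:Fin 5),3,4], 1, c[(1:Fin 5),2] * c[(3:Fin 5),4])
  | 2, 1, 2, 3 => (1, c[(1:Fin 5),2,3], c[(1:Fin 5),3] * c[(2:Fin 5),4])
  | 2, 1, 3, 0 => (1, c[(1:Fin 5),2] * c[(3:Fin 5),4], c[(1:Fin 5),2,3])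
  | 2, 1, 3, 1 => (1, c[(1:Fin 5),2] * c[(3:Fin 5),4], c[(1:Fin 5),2,4])
  | 2, 1, 3, 2 => (c[(2:Fin 5),3,4], c[(1:Fin 5),2] * c[(3:Fin 5),4], c[(1:Fin 5),2,3])
  | 2, 1, 3, 3 => (1, c[(1:Fin 5),2] * c[(3:Fin 5),4], c[(1:Fin 5),3,4])
  | 2, 2, 0, 0 => (1, c[(2:Fin 5),3,4], c[(1:Fin 5),4,3])
  | 2, 2, 0, 1 => (1, c[(1:Fin 5),2] * c[(3:Fin 5),4], c[(1:Fin 5),2,3])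
  | 2, 2, 0, 2 => (c[(2:Fin 5),3,4], c[(2:Fin 5),3,4], c[(1:Fin 5),4,3])
  | 2, 2, 0, 3 => (c[(2:Fin 5),3,4], c[(1:Fin 5),2] * c[(3:Fin 5),4], c[(2:Fin 5),4,3])
  | 2, 2, 1, 0 => (1, c[(1:Fin 5),2] * c[(3:Fin 5),4], c[(1:Fin 5),4,3])
  | 2, 2, 1, 1 => (1, c[(1:Fin 5),4,2], c[(2:Fin 5),4,3])
  | 2, 2, 1, 2 => (c[(2:Fin 5),3,4], c[(1:Fin 5),2] * c[(3:Fin 5),4], c[(1:Fin 5),4,3])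
  | 2, 2, 1, 3 => (1, c[(2:Fin 5),3,4], c[(0:Fin 5),3,2,4,1])
  | 2, 2, 2, 0 => (1, 1, c[(1:Fin 5),3,4])
  | 2, 2, 2, 1 => (1, c[(1:Fin 5),3,2], c[(1:Fin 5),3,4])
  | 2, 2, 2, 2 => (1, 1, c[(1:Fin 5),4] * c[(2:Fin 5),3])
  | 2, 2, 2, 3 => (1, c[(1:Fin 5),2] * c[(3:Fin 5),4], c[(1:Fin 5),4,2])
  | 2, 2, 3, 0 => (1, c[(2:Fin 5),4,3], 1)
  | 2, 2, 3, 1 => (1, 1, c[(1:Fin 5),3] * c[(2:Fin 5),4])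
  | 2, 2, 3, 2 => (c[(2:Fin 5),3,4], c[(2:Fin 5),4,3], 1)
  | 2, 2, 3, 3 => (1, c[(1:Fin 5),4] * c[(2:Fin 5),3], 1)
  | 2, 3, 0, 0 => (1, c[(2:Fin 5),4,3], c[(1:Fin 5),4] * c[(2:Fin 5),3])
  | 2, 3, 0, 1 => (1, 1, c[(1:Fin 5),3] * c[(2:Fin 5),4])
  | 2, 3, 0, 2 => (c[(2:Fin 5),3,4], c[(2:Fin 5),4,3], c[(1:Fin 5),4] * c[(2:Fin 5),3])
  | 2, 3, 0, 3 => (1, c[(2:Fin 5),3,4], c[(1:Fin 5),4,3])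
  | 2, 3, 1, 0 => (1, c[(2:Fin 5),3,4], c[(1:Fin 5),2] * c[(3:Fin 5),4])
  | 2, 3, 1, 1 => (1, c[(1:Fin 5),2] * c[(3:Fin 5),4], c[(1:Fin 5),2,4])
  | 2, 3, 1, 2 => (c[(2:Fin 5),3,4], c[(2:Fin 5),3,4], c[(1:Fin 5),2] * c[(3:Fin 5),4])
  | 2, 3, 1, 3 => (1, c[(1:Fin 5),2] * c[(3:Fin 5),4], c[(0:Fin 5),3,1])
  | 2, 3, 2, 0 => (1, 1, c[(1:Fin 5),3] * c[(2:Fin 5),4])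
  | 2, 3, 2, 1 => (1, c[(1:Fin 5),3,2], 1)
  | 2, 3, 2, 2 => (c[(2:Fin 5),3,4], 1, c[(1:Fin 5),3] * c[(2:Fin 5),4])
  | 2, 3, 2, 3 => (1, 1, c[(1:Fin 5),4] * c[(2:Fin 5),3])
  | 2, 3, 3, 0 => (1, c[(1:Fin 5),2] * c[(3:Fin 5),4], c[(1:Fin 5),4,2])
  | 2, 3, 3, 1 => (1, c[(1:Fin 5),4,2], c[(1:Fin 5),4] * c[(2:Fin 5),3])
  | 2, 3, 3, 2 => (1, 1, c[(1:Fin 5),4] * c[(2:Fin 5),3])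
  | 2, 3, 3, 3 => (1, c[(1:Fin 5),4] * c[(2:Fin 5),3], c[(1:Fin 5),4] * c[(2:Fin 5),3])
  | 3, 0, 0, 0 => (1, c[(2:Fin 5),3,4], c[(1:Fin 5),3,2])
  | 3, 0, 0, 1 => (1, c[(2:Fin 5),4,3], c[(1:Fin 5),4,3])
  | 3, 0, 0, 2 => (1, c[(2:Fin 5),3,4], c[(1:Fin 5),4,2])
  | 3, 0, 0, 3 => (1, 1, 1)
  | 3, 0, 1, 0 => (1, c[(1:Fin 5),2,3], c[(1:Fin 5),2,4])
  | 3, 0, 1, 1 => (1, 1, c[(1:Fin 5),4] * c[(2:Fin 5),3])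
  | 3, 0, 1, 2 => (1, 1, c[(1:Fin 5),3,4])
  | 3, 0, 1, 3 => (c[(2:Fin 5),3,4], 1, c[(0:Fin 5),4,1])
  | 3, 0, 2, 0 => (c[(2:Fin 5),4,3], c[(1:Fin 5),2,3], c[(2:Fin 5),3,4])
  | 3, 0, 2, 1 => (1, c[(1:Fin 5),2] * c[(3:Fin 5),4], 1)
  | 3, 0, 2, 2 => (c[(2:Fin 5),3,4], 1, c[(1:Fin 5),4,2])
  | 3, 0, 2, 3 => (c[(2:Fin 5),3,4], c[(1:Fin 5),2,3], c[(1:Fin 5),3,2])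
  | 3, 0, 3, 0 => (1, 1, c[(2:Fin 5),3,4])
  | 3, 0, 3, 1 => (c[(2:Fin 5),3,4], 1, c[(1:Fin 5),3,4])
  | 3, 0, 3, 2 => (1, c[(1:Fin 5),2] * c[(3:Fin 5),4], c[(1:Fin 5),2,4])
  | 3, 0, 3, 3 => (c[(1:Fin 5),2] * c[(3:Fin 5),4], 1, c[(1:Fin 5),3,4])
  | 3, 1, 0, 0 => (1, c[(1:Fin 5),2] * c[(3:Fin 5),4], c[(1:Fin 5),2,4])
  | 3, 1, 0, 1 => (1, c[(1:Fin 5),2] * c[(3:Fin 5),4], c[(1:Fin 5),4] * c[(2:Fin 5),3])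
  | 3, 1, 0, 2 => (1, c[(1:Fin 5),2,3], c[(1:Fin 5),4] * c[(2:Fin 5),3])
  | 3, 1, 0, 3 => (c[(2:Fin 5),3,4], c[(2:Fin 5),4,3], c[(0:Fin 5),4,1])
  | 3, 1, 1, 0 => (1, c[(2:Fin 5),4,3], c[(1:Fin 5),3,4])
  | 3, 1, 1, 1 => (1, c[(1:Fin 5),2,3], c[(1:Fin 5),3,4])
  | 3, 1, 1, 2 => (1, c[(1:Fin 5),2] * c[(3:Fin 5),4], c[(1:Fin 5),4] * c[(2:Fin 5),3])
  | 3, 1, 1, 3 => (1, 1, c[(1:Fin 5),2] * c[(3:Fin 5),4])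
  | 3, 1, 2, 0 => (1, 1, c[(1:Fin 5),2,4])
  | 3, 1, 2, 1 => (1, c[(2:Fin 5),3,4], c[(2:Fin 5),3,4])
  | 3, 1, 2, 2 => (1, c[(2:Fin 5),4,3], c[(1:Fin 5),2,4])
  | 3, 1, 2, 3 => (c[(2:Fin 5),3,4], c[(1:Fin 5),2] * c[(3:Fin 5),4], c[(1:Fin 5),2] * c[(3:Fin 5),4])
  | 3, 1, 3, 0 => (1, c[(1:Fin 5),2,3], c[(1:Fin 5),3] * c[(2:Fin 5),4])
  | 3, 1, 3, 1 => (1, 1, c[(1:Fin 5),4,2])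
  | 3, 1, 3, 2 => (1, 1, c[(2:Fin 5),3,4])
  | 3, 1, 3, 3 => (c[(2:Fin 5),3,4], c[(1:Fin 5),2,3], c[(2:Fin 5),4,3])
  | 3, 2, 0, 0 => (c[(2:Fin 5),4,3], c[(2:Fin 5),3,4], c[(1:Fin 5),4] * c[(2:Fin 5),3])
  | 3, 2, 0, 1 => (1, 1, c[(1:Fin 5),3] * c[(2:Fin 5),4])
  | 3, 2, 0, 2 => (c[(2:Fin 5),3,4], c[(2:Fin 5),4,3], 1)
  | 3, 2, 0, 3 => (c[(2:Fin 5),3,4], 1, c[(0:Fin 5),4,2,3,1])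
  | 3, 2, 1, 0 => (1, c[(2:Fin 5),3,4], 1)
  | 3, 2, 1, 1 => (1, c[(2:Fin 5),3,4], c[(2:Fin 5),4,3])
  | 3, 2, 1, 2 => (1, c[(1:Fin 5),2] * c[(3:Fin 5),4], c[(2:Fin 5),4,3])
  | 3, 2, 1, 3 => (c[(2:Fin 5),3,4], c[(2:Fin 5),3,4], c[(0:Fin 5),3,1,4,2])
  | 3, 2, 2, 0 => (1, 1, c[(1:Fin 5),3] * c[(2:Fin 5),4])
  | 3, 2, 2, 1 => (1, c[(1:Fin 5),3] * c[(2:Fin 5),4], c[(1:Fin 5),3] * c[(2:Fin 5),4])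
  | 3, 2, 2, 2 => (1, c[(2:Fin 5),3,4], c[(2:Fin 5),4,3])
  | 3, 2, 2, 3 => (1, 1, c[(1:Fin 5),4] * c[(2:Fin 5),3])
  | 3, 2, 3, 0 => (1, c[(1:Fin 5),2,3], c[(1:Fin 5),3,4])
  | 3, 2, 3, 1 => (1, c[(1:Fin 5),2] * c[(3:Fin 5),4], c[(1:Fin 5),2] * c[(3:Fin 5),4])
  | 3, 2, 3, 2 => (1, 1, c[(1:Fin 5),4] * c[(2:Fin 5),3])
  | 3, 2, 3, 3 => (c[(2:Fin 5),3,4], c[(1:Fin 5),3,4], c[(1:Fin 5),3,4])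
  | 3, 3, 0, 0 => (1, c[(2:Fin 5),3,4], c[(0:Fin 5),4,1])
  | 3, 3, 0, 1 => (c[(2:Fin 5),3,4], c[(1:Fin 5),2] * c[(3:Fin 5),4], 1)
  | 3, 3, 0, 2 => (1, c[(1:Fin 5),2] * c[(3:Fin 5),4], c[(1:Fin 5),2] * c[(3:Fin 5),4])
  | 3, 3, 0, 3 => (c[(1:Fin 5),2] * c[(3:Fin 5),4], c[(1:Fin 5),2] * c[(3:Fin 5),4], 1)
  | 3, 3, 1, 0 => (1, 1, c[(1:Fin 5),4,2])
  | 3, 3, 1, 1 => (1, c[(2:Fin 5),3,4], c[(0:Fin 5),3,4,2,1])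
  | 3, 3, 1, 2 => (1, c[(2:Fin 5),3,4], c[(0:Fin 5),4,3,2,1])
  | 3, 3, 1, 3 => (c[(2:Fin 5),3,4], c[(2:Fin 5),3,4], c[(1:Fin 5),2,3])
  | 3, 3, 2, 0 => (1, c[(1:Fin 5),3,4], c[(1:Fin 5),2,3])
  | 3, 3, 2, 1 => (1, c[(1:Fin 5),2] * c[(3:Fin 5),4], c[(1:Fin 5),2] * c[(3:Fin 5),4])
  | 3, 3, 2, 2 => (1, c[(1:Fin 5),4] * c[(2:Fin 5),3], 1)
  | 3, 3, 2, 3 => (c[(2:Fin 5),3,4], c[(1:Fin 5),3,4], c[(1:Fin 5),3,4])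
  | 3, 3, 3, 0 => (1, c[(1:Fin 5),2,3], c[(1:Fin 5),2,3])
  | 3, 3, 3, 1 => (1, 1, c[(1:Fin 5),4,3])
  | 3, 3, 3, 2 => (1, 1, 1)
  | 3, 3, 3, 3 => (1, 1, c[(1:Fin 5),4] * c[(2:Fin 5),3])

set_option maxRecDepth 100000
set_option maxHeartbeats 1000000

private theorem rep_sign : ∀ i : Fin 4, Perm.sign (repP i) = 1 := by decide

private theorem wit_sign : ∀ i j k l : Fin 4,
    Perm.sign (witP i j k l).1 = 1 ∧ Perm.sign (witP i j k l).2.1 = 1 ∧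
      Perm.sign (witP i j k l).2.2 = 1 := by decide

private theorem witP_spec : ∀ i j k l : Fin 4,
    repP l = (witP i j k l).1⁻¹ * repP i * (witP i j k l).1 *
      ((witP i j k l).2.1⁻¹ * repP j * (witP i j k l).2.1) *
      ((witP i j k l).2.2⁻¹ * repP k * (witP i j k l).2.2) := by decide

private def rep (i : Fin 4) : alternatingGroup (Fin 5) :=
  ⟨repP i, Perm.mem_alternatingGroup.mpr (rep_sign i)⟩

private theorem classify : ∀ u : alternatingGroup (Fin 5),
    u = 1 ∨ ∃ i : Fin 4, ∃ g : alternatingGroup (Fin 5), u = g⁻¹ * rep i * g := by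
  decide

/-- (S3) in A₅: the product of any three non-trivial conjugacy classes covers
`A₅ \ {1}`. -/
theorem stmt_6 (u₁ u₂ u₃ u₄ : alternatingGroup (Fin 5))
    (h₁ : u₁ ≠ 1) (h₂ : u₂ ≠ 1) (h₃ : u₃ ≠ 1) (h₄ : u₄ ≠ 1) :
    ∃ x y z : alternatingGroup (Fin 5),
      u₄ = x⁻¹ * u₁ * x * (y⁻¹ * u₂ * y) * (z⁻¹ * u₃ * z) := by
  obtain ⟨i, g₁, hg₁⟩ := (classify u₁).resolve_left h₁
  obtain ⟨j, g₂, hg₂⟩ := (classify u₂).resolve_left h₂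
  obtain ⟨k, g₃, hg₃⟩ := (classify u₃).resolve_left h₃
  obtain ⟨l, g₄, hg₄⟩ := (classify u₄).resolve_left h₄
  obtain ⟨s1, s2, s3⟩ := wit_sign i j k l
  set wx : alternatingGroup (Fin 5) := ⟨(witP i j k l).1, Perm.mem_alternatingGroup.mpr s1⟩
  set wy : alternatingGroup (Fin 5) := ⟨(witP i j k l).2.1, Perm.mem_alternatingGroup.mpr s2⟩
  set wz : alternatingGroup (Fin 5) := ⟨(witP i j k l).2.2, Perm.mem_alternatingGroup.mpr s3⟩
  have hw : rep l = wx⁻¹ * rep i * wx * (wy⁻¹ * rep j * wy) * (wz⁻¹ * rep k * wz) :=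
    Subtype.ext (witP_spec i j k l)
  refine ⟨g₁⁻¹ * wx * g₄, g₂⁻¹ * wy * g₄, g₃⁻¹ * wz * g₄, ?_⟩
  rw [hg₁, hg₂, hg₃, hg₄, hw]
  group
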